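/- Suppose there exist a matrix K ∈ ℝ^{n×m} and a symmetric positive definite matrix P satisfying P = (I−KC)(ÃPÃᵀ)(I−KC)ᵀ + d_m²(I−KC)G̃PG̃ᵀ(I−KC)ᵀ + (I−KC)Q_m(I−KC)ᵀ + KR_mKᵀ, where Q_m ≥ Q_i and R_m ≥ R_i for all i and d_m ≥ d_i. Then the sequences P_{k,i} defined by P_{k+1,i} = ((ÃP_{k,i}Ãᵀ + d_i∑_{j∈N_i}G̃P_{k,j}G̃ᵀ + Q_i)⁻¹ + CᵀR_i⁻¹C)⁻¹ with P_{0,i} = 0 satisfy P_{k,i} ≤ P for all k and all i. -/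

import Mathlib

open Matrix
open scoped BigOperators


section Aux
variable {n m : ℕ}

lemma psd_conj {A : Matrix (Fin n) (Fin n) ℝ} (hA : A.PosSemidef)
    (B : Matrix (Fin m) (Fin n) ℝ) : (B * A * Bᵀ).PosSemidef := by
  rw [← conjTranspose_eq_transpose_of_trivial]
  exact hA.mul_mul_conjTranspose_same B

lemma psd_smul {c : ℝ} (hc : 0 ≤ c) {A : Matrix (Fin n) (Fin n) ℝ}
    (hA : A.PosSemidef) : (c • A).PosSemidef := by
  constructor
  · rw [IsHermitian, conjTranspose_smul, star_trivial, hA.1.eq]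
  · intro x
    exact (hA.smul hc).2 x

lemma psd_sum {ι : Type*} (s : Finset ι) (f : ι → Matrix (Fin n) (Fin n) ℝ)
    (h : ∀ j ∈ s, (f j).PosSemidef) : (∑ j ∈ s, f j).PosSemidef :=
  Finset.sum_induction f _ (fun _ _ ha hb => ha.add hb) Matrix.PosSemidef.zero h

lemma joseph (S0 : Matrix (Fin n) (Fin n) ℝ) (hS0 : S0.PosDef)
    (R : Matrix (Fin m) (Fin m) ℝ) (hR : R.PosDef)
    (C : Matrix (Fin m) (Fin n) ℝ) (K : Matrix (Fin n) (Fin m) ℝ) :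
    ((1 - K * C) * S0 * (1 - K * C)ᵀ + K * R * Kᵀ
      - (S0⁻¹ + Cᵀ * R⁻¹ * C)⁻¹).PosSemidef := by
  obtain ⟨S, hSdef⟩ : ∃ S, S = C * S0 * Cᵀ + R := ⟨_, rfl⟩
  have hS : S.PosDef := by
    rw [hSdef]; exact Matrix.PosDef.posSemidef_add (psd_conj hS0.posSemidef C) hR
  have h1 : S0⁻¹ * S0 = 1 := Matrix.nonsing_inv_mul _ (isUnit_iff_ne_zero.2 hS0.det_pos.ne')
  have h2 : R⁻¹ * R = 1 := Matrix.nonsing_inv_mul _ (isUnit_iff_ne_zero.2 hR.det_pos.ne')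
  have h3 : S * S⁻¹ = 1 := Matrix.mul_nonsing_inv _ (isUnit_iff_ne_zero.2 hS.det_pos.ne')
  have h4 : S⁻¹ * S = 1 := Matrix.nonsing_inv_mul _ (isUnit_iff_ne_zero.2 hS.det_pos.ne')
  have hCS : C * S0 * Cᵀ = S - R := by rw [hSdef]; abel
  have e3 : R⁻¹ * ((S - R) * (S⁻¹ * (C * S0))) = R⁻¹ * (C * S0) - S⁻¹ * (C * S0) := by
    have expand : R⁻¹ * ((S - R) * (S⁻¹ * (C * S0)))
        = R⁻¹ * ((S * S⁻¹) * (C * S0)) - (R⁻¹ * R) * (S⁻¹ * (C * S0)) := by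
      simp only [Matrix.mul_add, Matrix.add_mul, Matrix.mul_sub, Matrix.sub_mul,
        Matrix.mul_assoc]
    rw [expand, h3, h2]; simp only [Matrix.one_mul]
  have hW : (S0⁻¹ + Cᵀ * R⁻¹ * C)⁻¹ = S0 - S0 * Cᵀ * S⁻¹ * (C * S0) := by
    apply Matrix.inv_eq_right_inv
    have expand : (S0⁻¹ + Cᵀ * R⁻¹ * C) * (S0 - S0 * Cᵀ * S⁻¹ * (C * S0))
        = S0⁻¹ * S0 - (S0⁻¹ * S0) * (Cᵀ * (S⁻¹ * (C * S0)))
          + Cᵀ * (R⁻¹ * (C * S0)) - Cᵀ * (R⁻¹ * ((C * S0 * Cᵀ) * (S⁻¹ * (C * S0)))) := by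
      simp only [Matrix.mul_add, Matrix.add_mul, Matrix.mul_sub, Matrix.sub_mul,
        Matrix.mul_assoc]
      abel
    rw [expand, h1, hCS, e3, Matrix.one_mul]
    simp only [Matrix.mul_sub, Matrix.sub_mul]
    abel
  have hS0t : S0ᵀ = S0 := by
    rw [← conjTranspose_eq_transpose_of_trivial]; exact hS0.1
  have hSit : S⁻¹ᵀ = S⁻¹ := by
    rw [← conjTranspose_eq_transpose_of_trivial]; exact hS.inv.1
  have hEt : (K - S0 * Cᵀ * S⁻¹)ᵀ = Kᵀ - S⁻¹ * (C * S0) := by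
    rw [transpose_sub, transpose_mul, transpose_mul, transpose_transpose, hS0t, hSit]
  have hE : (K - S0 * Cᵀ * S⁻¹) * S * (K - S0 * Cᵀ * S⁻¹)ᵀ
      = K * S * Kᵀ - K * (C * S0) - S0 * Cᵀ * Kᵀ + S0 * Cᵀ * S⁻¹ * (C * S0) := by
    rw [hEt]
    have expand : (K - S0 * Cᵀ * S⁻¹) * S * (Kᵀ - S⁻¹ * (C * S0))
        = K * S * Kᵀ - K * ((S * S⁻¹) * (C * S0)) - S0 * Cᵀ * ((S⁻¹ * S) * Kᵀ)
          + S0 * Cᵀ * (S⁻¹ * ((S * S⁻¹) * (C * S0))) := by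
      simp only [Matrix.mul_add, Matrix.add_mul, Matrix.mul_sub, Matrix.sub_mul,
        Matrix.mul_assoc]
      abel
    rw [expand, h3, h4, Matrix.one_mul]
    simp only [Matrix.mul_assoc, Matrix.one_mul]
  have ht : (1 - K * C)ᵀ = 1 - Cᵀ * Kᵀ := by
    rw [transpose_sub, transpose_one, transpose_mul]
  have hid : (1 - K * C) * S0 * (1 - K * C)ᵀ + K * R * Kᵀ
      - (S0⁻¹ + Cᵀ * R⁻¹ * C)⁻¹ = (K - S0 * Cᵀ * S⁻¹) * S * (K - S0 * Cᵀ * S⁻¹)ᵀ := by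
    rw [hW, hE, ht, hSdef]
    simp only [Matrix.mul_add, Matrix.add_mul, Matrix.mul_sub, Matrix.sub_mul,
      Matrix.mul_assoc, Matrix.mul_one, Matrix.one_mul]
    abel
  rw [hid]
  exact psd_conj hS.posSemidef _

end Aux

/-- Uniform boundedness of the distributed covariance recursion by a fixed-point matrix `P`
associated with a common gain `K` (Lemma 1 of the paper). -/
theorem distributed_covariance_bounded {n m N : ℕ}
    (At Gt : Matrix (Fin n) (Fin n) ℝ) (C : Matrix (Fin m) (Fin n) ℝ)
    (Q : Fin N → Matrix (Fin n) (Fin n) ℝ) (hQ : ∀ i, (Q i).PosDef)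
    (R : Fin N → Matrix (Fin m) (Fin m) ℝ) (hR : ∀ i, (R i).PosDef)
    (Qm : Matrix (Fin n) (Fin n) ℝ) (hQm : ∀ i, (Qm - Q i).PosSemidef)
    (Rm : Matrix (Fin m) (Fin m) ℝ) (hRm : ∀ i, (Rm - R i).PosSemidef)
    (Nbr : Fin N → Finset (Fin N)) (dm : ℕ) (hdm : ∀ i, (Nbr i).card ≤ dm)
    (K : Matrix (Fin n) (Fin m) ℝ)
    (Pfix : Matrix (Fin n) (Fin n) ℝ) (hPfix : Pfix.PosDef)
    (hfix : Pfix = (1 - K * C) * (At * Pfix * Atᵀ) * (1 - K * C)ᵀ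
      + (dm : ℝ) ^ 2 • ((1 - K * C) * (Gt * Pfix * Gtᵀ) * (1 - K * C)ᵀ)
      + (1 - K * C) * Qm * (1 - K * C)ᵀ + K * Rm * Kᵀ)
    (P : ℕ → Fin N → Matrix (Fin n) (Fin n) ℝ)
    (hP0 : ∀ i, P 0 i = 0)
    (hPrec : ∀ k i, P (k + 1) i =
      ((At * P k i * Atᵀ + ((Nbr i).card : ℝ) • ∑ j ∈ Nbr i, Gt * P k j * Gtᵀ + Q i)⁻¹
        + Cᵀ * (R i)⁻¹ * C)⁻¹) :
    ∀ k i, (Pfix - P k i).PosSemidef := by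
  -- the fixed point rewritten in terms of the bounding "prediction" matrix `Sm`
  obtain ⟨Sm, hSm⟩ : ∃ Sm, Sm = At * Pfix * Atᵀ + (dm : ℝ) ^ 2 • (Gt * Pfix * Gtᵀ) + Qm :=
    ⟨_, rfl⟩
  have hfix' : Pfix = (1 - K * C) * Sm * (1 - K * C)ᵀ + K * Rm * Kᵀ := by
    rw [hSm]
    simp only [Matrix.mul_add, Matrix.add_mul, Matrix.mul_smul, Matrix.smul_mul]
    exact hfix
  -- strengthened induction
  suffices H : ∀ k i, (P k i).PosSemidef ∧ (Pfix - P k i).PosSemidef by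
    exact fun k i => (H k i).2
  intro k
  induction k with
  | zero =>
    intro i
    rw [hP0 i, sub_zero]
    exact ⟨Matrix.PosSemidef.zero, hPfix.posSemidef⟩
  | succ k ih =>
    intro i
    -- the i-th prediction matrix
    obtain ⟨Si, hSi⟩ : ∃ Si, Si =
        At * P k i * Atᵀ + ((Nbr i).card : ℝ) • ∑ j ∈ Nbr i, Gt * P k j * Gtᵀ + Q i := ⟨_, rfl⟩
    have hSiPD : Si.PosDef := by
      rw [hSi]
      refine Matrix.PosDef.posSemidef_add (Matrix.PosSemidef.add (psd_conj (ih i).1 At) ?_)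
        (hQ i)
      refine psd_smul (Nat.cast_nonneg _) (psd_sum _ _ fun j _ => psd_conj (ih j).1 Gt)
    have hPnext : P (k + 1) i = (Si⁻¹ + Cᵀ * (R i)⁻¹ * C)⁻¹ := by rw [hPrec k i, hSi]
    have hCRC : (Cᵀ * (R i)⁻¹ * C).PosSemidef := by
      have h := psd_conj (hR i).inv.posSemidef Cᵀ
      rwa [transpose_transpose] at h
    have hPDnext : (P (k + 1) i).PosSemidef := by
      rw [hPnext]
      exact ((Matrix.PosDef.add_posSemidef hSiPD.inv hCRC).inv).posSemidef
    constructor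
    · exact hPDnext
    · -- difference of the prediction matrices is PSD
      have hSdiff : (Sm - Si).PosSemidef := by
        have hcast : ((Nbr i).card : ℝ) ≤ (dm : ℝ) := by exact_mod_cast hdm i
        have hc0 : (0 : ℝ) ≤ ((Nbr i).card : ℝ) := Nat.cast_nonneg _
        have hid : Sm - Si = At * (Pfix - P k i) * Atᵀ
            + ((dm : ℝ) ^ 2 - ((Nbr i).card : ℝ) ^ 2) • (Gt * Pfix * Gtᵀ)
            + ((Nbr i).card : ℝ) • ∑ j ∈ Nbr i, Gt * (Pfix - P k j) * Gtᵀ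
            + (Qm - Q i) := by
          rw [hSm, hSi]
          simp only [Matrix.mul_sub, Matrix.sub_mul, Finset.sum_sub_distrib,
            Finset.sum_const, smul_sub, sub_smul, ← Nat.cast_smul_eq_nsmul ℝ]
          rw [smul_smul]
          ring_nf
          abel
        rw [hid]
        refine Matrix.PosSemidef.add (Matrix.PosSemidef.add (Matrix.PosSemidef.add
          (psd_conj (ih i).2 At) ?_) ?_) (hQm i)
        · refine psd_smul ?_ (psd_conj hPfix.posSemidef Gt)
          have := sq_le_sq' (by linarith : -(dm : ℝ) ≤ ((Nbr i).card : ℝ)) hcast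
          simpa [sq] using sub_nonneg.2 this
        · exact psd_smul hc0 (psd_sum _ _ fun j _ => psd_conj (ih j).2 Gt)
      have hbr1 : (Pfix - ((1 - K * C) * Si * (1 - K * C)ᵀ + K * (R i) * Kᵀ)).PosSemidef := by
        have heq : Pfix - ((1 - K * C) * Si * (1 - K * C)ᵀ + K * (R i) * Kᵀ)
            = (1 - K * C) * (Sm - Si) * (1 - K * C)ᵀ + K * (Rm - R i) * Kᵀ := by
          conv_lhs => rw [hfix']
          simp only [Matrix.mul_sub, Matrix.sub_mul]
          abel
        rw [heq]
        exact (psd_conj hSdiff _).add (psd_conj (hRm i) K)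
      have hbr2 := joseph Si hSiPD (R i) (hR i) C K
      have hsplit : Pfix - P (k + 1) i
          = (Pfix - ((1 - K * C) * Si * (1 - K * C)ᵀ + K * (R i) * Kᵀ))
            + ((1 - K * C) * Si * (1 - K * C)ᵀ + K * (R i) * Kᵀ
              - (Si⁻¹ + Cᵀ * (R i)⁻¹ * C)⁻¹) := by
        rw [hPnext]; abel
      rw [hsplit]
      exact hbr1.add hbr2
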